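/- Let m and d be positive integers and let σ : {0,1}^m → Matrix (Fin d) (Fin d) ℂ assign to every m-bit string x a density matrix σ_x (positive semidefinite with trace 1). Let σ̄ = 2^{-m} · ∑_x σ_x be the average encoded state, and let I = S(σ̄) − 2^{-m} · ∑_x S(σ_x) be the mutual information between a uniformly random input X and its encoding. Then 2^{-m} · ∑_{x ∈ {0,1}^m} ‖σ̄ − σ_x‖₁ ≤ 2·√I. (Average encoding theorem.) -/

import Mathlib

open Matrix BigOperators Kronecker
open scoped ComplexOrder

noncomputable section
open Classical

/-- The positive semidefinite square root of a matrix (junk value `0` if not PSD). -/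
def msqrt {d : Type*} [Fintype d] [DecidableEq d] (A : Matrix d d ℂ) : Matrix d d ℂ :=
  if h : A.PosSemidef then
    (h.1.eigenvectorUnitary : Matrix d d ℂ) * diagonal ((↑) ∘ (√·) ∘ h.1.eigenvalues) *
      (star h.1.eigenvectorUnitary : Matrix d d ℂ)
  else 0

/-- The trace norm `Tr √(AᴴA)` of a complex matrix. -/
def traceNorm {d : Type*} [Fintype d] [DecidableEq d] (A : Matrix d d ℂ) : ℝ :=
  ((msqrt (Aᴴ * A)).trace).re

/-- `ρ` is a density matrix: positive semidefinite with trace `1`. -/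
def IsDensityMatrix {d : Type*} [Fintype d] [DecidableEq d] (ρ : Matrix d d ℂ) : Prop :=
  ρ.PosSemidef ∧ ρ.trace = 1

/-- Von Neumann entropy, base 2 (junk value `0` if not Hermitian). -/
def vnEntropy {d : Type*} [Fintype d] [DecidableEq d] (ρ : Matrix d d ℂ) : ℝ :=
  if h : ρ.IsHermitian then -∑ i, (h.eigenvalues i) * Real.logb 2 (h.eigenvalues i) else 0

/-- The binary entropy function, base 2. -/
def binEntropy (p : ℝ) : ℝ := -p * Real.logb 2 p - (1 - p) * Real.logb 2 (1 - p)

/-- Fidelity of two matrices: `(Tr √(√ρ₁ ρ₂ √ρ₁))²`. -/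
def fidelity {d : Type*} [Fintype d] [DecidableEq d] (ρ₁ ρ₂ : Matrix d d ℂ) : ℝ :=
  (((msqrt (msqrt ρ₁ * ρ₂ * msqrt ρ₁)).trace).re) ^ 2

/-- Partial trace over the second tensor factor. -/
def ptraceSnd {m k : ℕ} (ρ : Matrix (Fin m × Fin k) (Fin m × Fin k) ℂ) :
    Matrix (Fin m) (Fin m) ℂ :=
  Matrix.of fun i j => ∑ l : Fin k, ρ (i, l) (j, l)

end

noncomputable section AuxiliaryAE
open Classical
open scoped MatrixOrder

set_option linter.unusedSectionVars false

variable {n : Type*} [Fintype n] [DecidableEq n]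

lemma msqrt_eq {A : Matrix n n ℂ} (hA : A.PosSemidef) : msqrt A = CFC.sqrt A := by
  rw [CFC.sqrt_eq_cfc, cfc_nnreal_eq_real _ A hA.nonneg, hA.1.cfc_eq, IsHermitian.cfc,
    Unitary.conjStarAlgAut_apply, msqrt, dif_pos hA]
  congr 3
  funext i
  simp only [Function.comp_apply, Real.coe_sqrt, Real.coe_toNNReal _ (hA.eigenvalues_nonneg i)]
  rfl

lemma msqrt_mul_self' {A : Matrix n n ℂ} (hA : A.PosSemidef) : msqrt A * msqrt A = A := by
  rw [msqrt_eq hA]; exact CFC.sqrt_mul_sqrt_self A hA.nonneg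

lemma msqrt_posSemidef {A : Matrix n n ℂ} (hA : A.PosSemidef) : (msqrt A).PosSemidef := by
  rw [msqrt_eq hA]; exact (CFC.sqrt_nonneg A).posSemidef

lemma vnEntropy_eq {A : Matrix n n ℂ} (hA : A.IsHermitian) :
    vnEntropy A = -∑ i, hA.eigenvalues i * Real.logb 2 (hA.eigenvalues i) := dif_pos hA

lemma conj_posSemidef {U : Matrix n n ℂ} (f : n → ℝ) (hf : ∀ i, 0 ≤ f i) :
    (U * diagonal (fun i => (f i : ℂ)) * Uᴴ).PosSemidef := by
  have hd : (diagonal (fun i => (f i : ℂ))).PosSemidef :=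
    posSemidef_diagonal_iff.mpr fun i => by
      simpa using Complex.zero_le_real.mpr (hf i)
  simpa [Matrix.star_eq_conjTranspose, mul_assoc] using hd.mul_mul_conjTranspose_same U

lemma conj_mul_conj {U : Matrix n n ℂ} (hU1 : Uᴴ * U = 1) (a b : n → ℂ) :
    (U * diagonal a * Uᴴ) * (U * diagonal b * Uᴴ) = U * diagonal (fun i => a i * b i) * Uᴴ := by
  calc (U * diagonal a * Uᴴ) * (U * diagonal b * Uᴴ)
      = U * diagonal a * (Uᴴ * U) * diagonal b * Uᴴ := by noncomm_ring
    _ = U * (diagonal a * diagonal b) * Uᴴ := by rw [hU1]; noncomm_ring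
    _ = U * diagonal (fun i => a i * b i) * Uᴴ := by rw [diagonal_mul_diagonal]

lemma msqrt_conj {U : Matrix n n ℂ} (hU1 : Uᴴ * U = 1) (f : n → ℝ) (hf : ∀ i, 0 ≤ f i) :
    msqrt (U * diagonal (fun i => (f i : ℂ)) * Uᴴ)
      = U * diagonal (fun i => (Real.sqrt (f i) : ℂ)) * Uᴴ := by
  have hP := conj_posSemidef (U := U) f hf
  have hB := conj_posSemidef (U := U) (fun i => Real.sqrt (f i)) (fun i => Real.sqrt_nonneg _)
  rw [msqrt_eq hP]
  refine CFC.sqrt_unique ?_ hB.nonneg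
  rw [conj_mul_conj hU1]
  have : (fun i => ((Real.sqrt (f i) : ℂ)) * ((Real.sqrt (f i) : ℂ))) = fun i => ((f i : ℂ)) := by
    funext i
    rw [← Complex.ofReal_mul, Real.mul_self_sqrt (hf i)]
  rw [this]

lemma trace_conj {U : Matrix n n ℂ} (hU1 : Uᴴ * U = 1) (a : n → ℂ) :
    (U * diagonal a * Uᴴ).trace = ∑ i, a i := by
  rw [trace_mul_cycle, hU1, one_mul, trace_diagonal]

lemma star_mul_self_eq' (z : ℂ) : star z * z = ((‖z‖ ^ 2 : ℝ) : ℂ) := by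
  rw [← starRingEnd_apply, mul_comm, Complex.mul_conj, Complex.normSq_eq_norm_sq]

lemma entry_conj (b : n → ℂ) (W : Matrix n n ℂ) (j k : n) :
    (W * diagonal b * Wᴴ) j k = ∑ i, b i * ((starRingEnd ℂ) (W k i) * W j i) := by
  simp only [mul_apply, diagonal_apply, conjTranspose_apply, mul_ite, ite_mul, mul_zero, zero_mul,
    Finset.sum_ite_eq, Finset.sum_ite_eq', Finset.mem_univ, if_true, Finset.sum_mul]
  exact Finset.sum_congr rfl fun i _ => by rw [starRingEnd_apply]; ring

lemma trace_diag_conj (a b : n → ℂ) (W : Matrix n n ℂ) :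
    (diagonal a * (W * diagonal b * Wᴴ)).trace
      = ∑ j, ∑ i, a j * b i * ((starRingEnd ℂ) (W j i) * W j i) := by
  have h : ∀ j, (diagonal a * (W * diagonal b * Wᴴ)) j j
      = a j * (W * diagonal b * Wᴴ) j j := by
    intro j; rw [diagonal_mul]
  simp only [trace, diag_apply, h, entry_conj, Finset.mul_sum]
  exact Finset.sum_congr rfl fun j _ => Finset.sum_congr rfl fun i _ => by ring

lemma conj_sandwich (V U : Matrix n n ℂ) (D : Matrix n n ℂ) :
    Vᴴ * (U * D * Uᴴ) * V = (Vᴴ * U) * D * (Vᴴ * U)ᴴ := by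
  rw [conjTranspose_mul, conjTranspose_conjTranspose]
  noncomm_ring

lemma trace_conj_pair (V U : Matrix n n ℂ) (a b : n → ℝ) :
    (((V * diagonal (fun j => ((a j : ℝ) : ℂ)) * Vᴴ)
        * (U * diagonal (fun i => ((b i : ℝ) : ℂ)) * Uᴴ)).trace).re
      = ∑ j, ∑ i, a j * b i * ‖(Vᴴ * U) j i‖ ^ 2 := by
  set M := U * diagonal (fun i => ((b i : ℝ) : ℂ)) * Uᴴ with hM
  have h1 : ((V * diagonal (fun j => ((a j : ℝ) : ℂ)) * Vᴴ) * M).trace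
      = (diagonal (fun j => ((a j : ℝ) : ℂ)) * (Vᴴ * M * V)).trace := by
    rw [mul_assoc, mul_assoc, trace_mul_comm, mul_assoc]
  rw [h1, hM, conj_sandwich, trace_diag_conj]
  have h2 : ∀ j i, ((a j : ℝ) : ℂ) * ((b i : ℝ) : ℂ)
        * ((starRingEnd ℂ) ((Vᴴ * U) j i) * (Vᴴ * U) j i)
      = (((a j * b i * ‖(Vᴴ * U) j i‖ ^ 2 : ℝ)) : ℂ) := by
    intro j i
    rw [starRingEnd_apply, star_mul_self_eq']
    push_cast
    ring
  rw [Finset.sum_congr rfl fun j _ => Finset.sum_congr rfl fun i _ => h2 j i]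
  rw [Complex.re_sum]
  refine Finset.sum_congr rfl fun j _ => ?_
  rw [Complex.re_sum]
  exact Finset.sum_congr rfl fun i _ => Complex.ofReal_re _

lemma entry_re (V U : Matrix n n ℂ) (b : n → ℝ) (j : n) :
    ((Vᴴ * (U * diagonal (fun i => ((b i : ℝ) : ℂ)) * Uᴴ) * V) j j).re
      = ∑ i, b i * ‖(Vᴴ * U) j i‖ ^ 2 := by
  rw [conj_sandwich, entry_conj]
  have h2 : ∀ i, ((b i : ℝ) : ℂ) * ((starRingEnd ℂ) ((Vᴴ * U) j i) * (Vᴴ * U) j i)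
      = (((b i * ‖(Vᴴ * U) j i‖ ^ 2 : ℝ)) : ℂ) := by
    intro i
    rw [starRingEnd_apply, star_mul_self_eq']
    push_cast
    ring
  rw [Finset.sum_congr rfl fun i _ => h2 i, Complex.re_sum]
  exact Finset.sum_congr rfl fun i _ => Complex.ofReal_re _

lemma hsq_eq (M : Matrix n n ℂ) : ((Mᴴ * M).trace).re = ∑ p : n × n, ‖M p.2 p.1‖ ^ 2 := by
  have h : (Mᴴ * M).trace = ∑ p : n × n, ((‖M p.2 p.1‖ ^ 2 : ℝ) : ℂ) := by
    rw [Fintype.sum_prod_type]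
    simp only [trace, diag_apply, mul_apply, conjTranspose_apply, star_mul_self_eq']
  rw [h, Complex.re_sum]
  exact Finset.sum_congr rfl fun p _ => Complex.ofReal_re _

lemma trace_CS (M N : Matrix n n ℂ) :
    ((M * N).trace).re ≤ Real.sqrt ((Mᴴ * M).trace).re * Real.sqrt ((Nᴴ * N).trace).re := by
  have h1 : (M * N).trace = ∑ p : n × n, M p.1 p.2 * N p.2 p.1 := by
    rw [Fintype.sum_prod_type]
    simp [trace, mul_apply]
  have h2 : ((M * N).trace).re ≤ ∑ p : n × n, ‖M p.1 p.2‖ * ‖N p.2 p.1‖ := by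
    refine (Complex.re_le_norm _).trans ?_
    rw [h1]
    refine (norm_sum_le _ _).trans ?_
    exact Finset.sum_le_sum fun p _ => le_of_eq (norm_mul _ _)
  refine h2.trans ?_
  have h3 := Real.sum_mul_le_sqrt_mul_sqrt Finset.univ
    (fun p : n × n => ‖M p.1 p.2‖) (fun p : n × n => ‖N p.2 p.1‖)
  refine h3.trans (le_of_eq ?_)
  rw [hsq_eq M, hsq_eq N]
  congr 2
  exact (Fintype.sum_equiv (Equiv.prodComm n n) _ _ fun p => rfl)

section herm
variable {Δ : Matrix n n ℂ}

lemma spec_eq (hΔ : Δ.IsHermitian) : Δ = (hΔ.eigenvectorUnitary : Matrix n n ℂ) *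
    diagonal (fun i => ((hΔ.eigenvalues i : ℝ) : ℂ)) *
    (hΔ.eigenvectorUnitary : Matrix n n ℂ)ᴴ := by
  have := hΔ.spectral_theorem
  rw [Unitary.conjStarAlgAut_apply] at this
  rw [← Matrix.star_eq_conjTranspose]
  exact this

lemma spec_hU1 (hΔ : Δ.IsHermitian) : ((hΔ.eigenvectorUnitary : Matrix n n ℂ))ᴴ *
    (hΔ.eigenvectorUnitary : Matrix n n ℂ) = 1 := by
  rw [← Matrix.star_eq_conjTranspose]
  exact Matrix.mem_unitaryGroup_iff'.mp hΔ.eigenvectorUnitary.2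

lemma spec_hU2 (hΔ : Δ.IsHermitian) : (hΔ.eigenvectorUnitary : Matrix n n ℂ) *
    ((hΔ.eigenvectorUnitary : Matrix n n ℂ))ᴴ = 1 := by
  rw [← Matrix.star_eq_conjTranspose]
  exact Matrix.mem_unitaryGroup_iff.mp hΔ.eigenvectorUnitary.2

lemma traceNorm_herm (hΔ : Δ.IsHermitian) : traceNorm Δ = ∑ i, |hΔ.eigenvalues i| := by
  have hU1 := spec_hU1 hΔ
  have hsq : Δᴴ * Δ = (hΔ.eigenvectorUnitary : Matrix n n ℂ) *
      diagonal (fun i => ((hΔ.eigenvalues i ^ 2 : ℝ) : ℂ)) *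
      (hΔ.eigenvectorUnitary : Matrix n n ℂ)ᴴ := by
    conv_lhs => rw [hΔ.eq, spec_eq hΔ]
    rw [conj_mul_conj hU1]
    congr 1
    congr 1
    funext i
    push_cast
    ring
  rw [traceNorm, hsq, msqrt_conj hU1 _ (fun i => sq_nonneg _), trace_conj hU1]
  have : ∀ i, ((Real.sqrt (hΔ.eigenvalues i ^ 2) : ℝ) : ℂ) = ((|hΔ.eigenvalues i| : ℝ) : ℂ) := by
    intro i; rw [Real.sqrt_sq_eq_abs]
  rw [Finset.sum_congr rfl fun i _ => this i, Complex.re_sum]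
  exact Finset.sum_congr rfl fun i _ => Complex.ofReal_re _

lemma traceNorm_herm_nonneg (hΔ : Δ.IsHermitian) : 0 ≤ traceNorm Δ := by
  rw [traceNorm_herm hΔ]
  exact Finset.sum_nonneg fun i _ => abs_nonneg _

lemma traceNorm_herm_le (hΔ : Δ.IsHermitian) {X Y : Matrix n n ℂ} (hX : X.IsHermitian)
    (hY : Y.IsHermitian) (hXY : X * Y + Y * X = Δ + Δ) :
    traceNorm Δ ≤ Real.sqrt ((X * X).trace).re * Real.sqrt ((Y * Y).trace).re := by
  set U : Matrix n n ℂ := (hΔ.eigenvectorUnitary : Matrix n n ℂ) with hU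
  have hU1 := spec_hU1 hΔ
  have hU2 := spec_hU2 hΔ
  set s : n → ℂ := fun i => if 0 ≤ hΔ.eigenvalues i then 1 else -1 with hs
  set Uε : Matrix n n ℂ := U * diagonal s * Uᴴ with hUε
  have hUεH : Uεᴴ = U * diagonal (fun i => star (s i)) * Uᴴ := by
    rw [hUε, conjTranspose_mul, conjTranspose_mul, conjTranspose_conjTranspose,
      diagonal_conjTranspose]
    rw [mul_assoc]
    rfl
  have hUεU : Uεᴴ * Uε = 1 := by
    rw [hUεH, hUε, conj_mul_conj hU1]
    have : (fun i => star (s i) * s i) = fun _ => (1 : ℂ) := by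
      funext i; rw [hs]; dsimp only; split_ifs <;> simp
    rw [this, diagonal_one, mul_one, hU2]
  have htr : ((Uε * Δ).trace).re = traceNorm Δ := by
    conv_lhs => rw [spec_eq hΔ]
    rw [hUε, ← hU, conj_mul_conj hU1, trace_conj hU1]
    have : ∀ i, s i * ((hΔ.eigenvalues i : ℝ) : ℂ) = ((|hΔ.eigenvalues i| : ℝ) : ℂ) := by
      intro i; rw [hs]; dsimp only; split_ifs with h
      · rw [one_mul, abs_of_nonneg h]
      · rw [abs_of_nonpos (le_of_not_ge h)]; push_cast; ring
    rw [Finset.sum_congr rfl fun i _ => this i, Complex.re_sum, traceNorm_herm hΔ]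
    exact Finset.sum_congr rfl fun i _ => Complex.ofReal_re _
  have hkey : traceNorm Δ + traceNorm Δ ≤
      Real.sqrt ((X * X).trace).re * Real.sqrt ((Y * Y).trace).re
      + Real.sqrt ((X * X).trace).re * Real.sqrt ((Y * Y).trace).re := by
    have e1 : Uε * Δ + Uε * Δ = (Uε * X) * Y + (Uε * Y) * X := by
      calc Uε * Δ + Uε * Δ = Uε * (Δ + Δ) := (mul_add _ _ _).symm
        _ = Uε * (X * Y + Y * X) := by rw [hXY]
        _ = (Uε * X) * Y + (Uε * Y) * X := by noncomm_ring
    have e2 : ((Uε * Δ).trace).re + ((Uε * Δ).trace).re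
        = (((Uε * X) * Y).trace).re + (((Uε * Y) * X).trace).re := by
      have := congrArg Matrix.trace e1
      rw [trace_add, trace_add] at this
      have := congrArg Complex.re this
      simpa using this
    have c1 : (((Uε * X) * Y).trace).re ≤
        Real.sqrt ((X * X).trace).re * Real.sqrt ((Y * Y).trace).re := by
      have h := trace_CS (Uε * X) Y
      have e3 : (Uε * X)ᴴ * (Uε * X) = X * X := by
        rw [conjTranspose_mul]
        calc Xᴴ * Uεᴴ * (Uε * X) = Xᴴ * (Uεᴴ * Uε) * X := by noncomm_ring
          _ = X * X := by rw [hUεU, mul_one, hX.eq]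
      have e4 : Yᴴ * Y = Y * Y := by rw [hY.eq]
      rwa [e3, e4] at h
    have c2 : (((Uε * Y) * X).trace).re ≤
        Real.sqrt ((X * X).trace).re * Real.sqrt ((Y * Y).trace).re := by
      have h := trace_CS (Uε * Y) X
      have e3 : (Uε * Y)ᴴ * (Uε * Y) = Y * Y := by
        rw [conjTranspose_mul]
        calc Yᴴ * Uεᴴ * (Uε * Y) = Yᴴ * (Uεᴴ * Uε) * Y := by noncomm_ring
          _ = Y * Y := by rw [hUεU, mul_one, hY.eq]
      have e4 : Xᴴ * X = X * X := by rw [hX.eq]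
      rw [e3, e4] at h
      exact h.trans (le_of_eq (mul_comm _ _))
    rw [← htr, e2]
    exact add_le_add c1 c2
  linarith

end herm

lemma core_jensen (p q : n → ℝ) (c : n → n → ℝ)
    (hp : ∀ i, 0 ≤ p i) (hq : ∀ j, 0 ≤ q j) (hc : ∀ j i, 0 ≤ c j i)
    (hpsum : ∑ i, p i = 1) (hcol : ∀ i, ∑ j, c j i = 1)
    (hsupp : ∀ j, q j = 0 → ∀ i, p i * c j i = 0) :
    Real.exp ((1/2) * ((∑ j, (∑ i, p i * c j i) * Real.log (q j))
        - ∑ i, p i * Real.log (p i)))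
      ≤ ∑ j, ∑ i, Real.sqrt (q j) * Real.sqrt (p i) * c j i := by
  set μ : n × n → ℝ := fun z => p z.2 * c z.1 z.2 with hμ
  set t : n × n → ℝ := fun z =>
    if p z.2 * c z.1 z.2 = 0 then 0 else (Real.log (q z.1) - Real.log (p z.2)) / 2 with ht
  have hμ0 : ∀ z : n × n, 0 ≤ μ z := fun z => mul_nonneg (hp _) (hc _ _)
  have hμsum : ∑ z : n × n, μ z = 1 := by
    rw [Fintype.sum_prod_type]
    rw [Finset.sum_comm]
    calc ∑ i, ∑ j, μ (j, i) = ∑ i, p i * ∑ j, c j i := by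
          simp only [hμ, Finset.mul_sum]
      _ = 1 := by simp only [hcol, mul_one, hpsum]
  have hjen := (convexOn_exp).map_sum_le (t := Finset.univ) (w := μ) (p := t)
      (fun z _ => hμ0 z) hμsum (fun z _ => Set.mem_univ _)
  have hlhs : ∑ z : n × n, μ z • t z
      = (1/2) * ((∑ j, (∑ i, p i * c j i) * Real.log (q j)) - ∑ i, p i * Real.log (p i)) := by
    have step : ∀ z : n × n, μ z • t z
        = (p z.2 * c z.1 z.2) * (Real.log (q z.1) - Real.log (p z.2)) / 2 := by
      intro z
      rw [smul_eq_mul, hμ, ht]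
      dsimp only
      split_ifs with h
      · rw [h]; ring
      · ring
    rw [Finset.sum_congr rfl fun z _ => step z, Fintype.sum_prod_type]
    have expand : ∀ j i, (p i * c j i) * (Real.log (q j) - Real.log (p i)) / 2
        = (1/2) * ((p i * c j i) * Real.log (q j)) - (1/2) * ((p i * c j i) * Real.log (p i)) := by
      intro j i; ring
    rw [Finset.sum_congr rfl fun j _ => Finset.sum_congr rfl fun i _ => expand j i]
    simp only [Finset.sum_sub_distrib, ← Finset.mul_sum]
    have A : ∑ j, ∑ i, (p i * c j i) * Real.log (q j)
        = ∑ j, (∑ i, p i * c j i) * Real.log (q j) := by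
      refine Finset.sum_congr rfl fun j _ => ?_
      rw [Finset.sum_mul]
    have B : ∑ j, ∑ i, (p i * c j i) * Real.log (p i)
        = ∑ i, p i * Real.log (p i) := by
      rw [Finset.sum_comm]
      refine Finset.sum_congr rfl fun i _ => ?_
      have : ∀ j, (p i * c j i) * Real.log (p i)
          = (p i * Real.log (p i)) * c j i := by intro j; ring
      rw [Finset.sum_congr rfl fun j _ => this j, ← Finset.mul_sum, hcol i]
      ring
    rw [A, B]
    ring
  have hrhs : ∑ z : n × n, μ z • Real.exp (t z)
      = ∑ j, ∑ i, Real.sqrt (q j) * Real.sqrt (p i) * c j i := by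
    rw [Fintype.sum_prod_type]
    refine Finset.sum_congr rfl fun j _ => Finset.sum_congr rfl fun i _ => ?_
    rw [smul_eq_mul, hμ, ht]
    dsimp only
    split_ifs with h
    · rcases mul_eq_zero.mp h with h' | h' <;> simp [h']
    · have hpi : 0 < p i := lt_of_le_of_ne (hp i) (fun hh => h (by rw [← hh]; ring))
      have hcji : c j i ≠ 0 := fun hh => h (by rw [hh]; ring)
      have hqj : 0 < q j := by
        rcases lt_or_eq_of_le (hq j) with h' | h'
        · exact h'
        · exact absurd (hsupp j h'.symm i) h
      have hsq : ∀ {x : ℝ}, 0 < x → Real.exp (Real.log x / 2) = Real.sqrt x := by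
        intro x hx
        rw [Real.sqrt_eq_rpow, Real.rpow_def_of_pos hx]
        congr 1
        ring
      have he : Real.exp ((Real.log (q j) - Real.log (p i)) / 2)
          = Real.sqrt (q j) * (Real.sqrt (p i))⁻¹ := by
        rw [sub_div, Real.exp_sub, hsq hqj, hsq hpi, div_eq_mul_inv]
      rw [he]
      have hps : p i * (Real.sqrt (p i))⁻¹ = Real.sqrt (p i) := by
        rw [← div_eq_mul_inv, Real.div_sqrt]
      calc p i * c j i * (Real.sqrt (q j) * (Real.sqrt (p i))⁻¹)
          = (p i * (Real.sqrt (p i))⁻¹) * (Real.sqrt (q j) * c j i) := by ring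
        _ = Real.sqrt (q j) * Real.sqrt (p i) * c j i := by rw [hps]; ring
  rw [hlhs, hrhs] at hjen
  exact hjen

end AuxiliaryAE

set_option maxHeartbeats 1600000 in
/-- **Average encoding theorem.** If a quantum encoding of uniformly random `m`-bit
strings carries mutual information `I` about the string, then the average trace
distance of an encoded state from the average encoded state is at most `2√I`. -/
theorem average_encoding (m d : ℕ) (hm : 0 < m) (hd : 0 < d)
    (σ : (Fin m → Bool) → Matrix (Fin d) (Fin d) ℂ)
    (hσ : ∀ x, IsDensityMatrix (σ x)) :
    ((2 : ℝ) ^ m)⁻¹ * ∑ x : Fin m → Bool,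
        traceNorm ((((2 : ℂ) ^ m)⁻¹ • ∑ y : Fin m → Bool, σ y) - σ x) ≤
      2 * Real.sqrt
        (vnEntropy (((2 : ℂ) ^ m)⁻¹ • ∑ y : Fin m → Bool, σ y) -
          ((2 : ℝ) ^ m)⁻¹ * ∑ x : Fin m → Bool, vnEntropy (σ x)) := by
  classical
  have h2m : ((2 : ℂ) ^ m) ≠ 0 := pow_ne_zero _ (by norm_num)
  set cC : ℂ := ((2 : ℂ) ^ m)⁻¹ with hcC
  have hcR : cC = ((((2 : ℝ) ^ m)⁻¹ : ℝ) : ℂ) := by rw [hcC]; push_cast; ring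
  set σbar : Matrix (Fin d) (Fin d) ℂ := cC • ∑ y : Fin m → Bool, σ y with hσbar
  have hSb : (∑ y : Fin m → Bool, σ y).PosSemidef := by
    refine Finset.sum_induction σ _ (fun a b ha hb => ha.add hb) ?_ (fun y _ => (hσ y).1)
    refine ⟨isHermitian_zero, fun x => ?_⟩
    simp
  have hbar : σbar.PosSemidef := by
    constructor
    · show σbarᴴ = σbar
      rw [hσbar, conjTranspose_smul, hSb.1.eq, hcR]
      congr 1
      exact Complex.conj_ofReal _
    · rw [hσbar]
      exact (hSb.smul (a := cC) (by rw [hcR]; exact Complex.zero_le_real.mpr (by positivity))).2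
  have hbarH := hbar.1
  have hcard : (Finset.univ : Finset (Fin m → Bool)).card = 2 ^ m := by
    simp [Finset.card_univ]
  have htrbar : σbar.trace = 1 := by
    rw [hσbar, trace_smul, trace_sum, smul_eq_mul]
    have e1 : ∑ y : Fin m → Bool, (σ y).trace = ((2 : ℂ) ^ m) := by
      rw [Finset.sum_congr rfl fun y _ => (hσ y).2]
      simp [hcard]
    rw [e1, hcC, inv_mul_cancel₀ h2m]
  set V : Matrix (Fin d) (Fin d) ℂ := (hbarH.eigenvectorUnitary : Matrix (Fin d) (Fin d) ℂ)
    with hVdef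
  set q : Fin d → ℝ := hbarH.eigenvalues with hqdef
  have hV1 : Vᴴ * V = 1 := spec_hU1 hbarH
  have hV2 : V * Vᴴ = 1 := spec_hU2 hbarH
  have hspecV : σbar = V * diagonal (fun j => ((q j : ℝ) : ℂ)) * Vᴴ := spec_eq hbarH
  have hqnn : ∀ j, 0 ≤ q j := hbar.eigenvalues_nonneg
  have hqent : vnEntropy σbar = -∑ j, q j * Real.logb 2 (q j) := vnEntropy_eq hbarH
  have hmsbar : msqrt σbar = V * diagonal (fun j => ((Real.sqrt (q j) : ℝ) : ℂ)) * Vᴴ := by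
    conv_lhs => rw [hspecV]
    exact msqrt_conj hV1 q hqnn
  set r : (Fin m → Bool) → Fin d → ℝ := fun x j => ((Vᴴ * σ x * V) j j).re with hrdef
  have havg : ∀ j, ∑ x : Fin m → Bool, r x j = (2 : ℝ) ^ m * q j := by
    intro j
    have e1 : Vᴴ * σbar * V = diagonal (fun j => ((q j : ℝ) : ℂ)) := by
      conv_lhs => rw [hspecV]
      calc Vᴴ * (V * diagonal (fun j => ((q j : ℝ) : ℂ)) * Vᴴ) * V
          = (Vᴴ * V) * diagonal (fun j => ((q j : ℝ) : ℂ)) * (Vᴴ * V) := by noncomm_ring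
        _ = diagonal (fun j => ((q j : ℝ) : ℂ)) := by rw [hV1, one_mul, mul_one]
    have e2 : Vᴴ * σbar * V = cC • ∑ x : Fin m → Bool, Vᴴ * σ x * V := by
      rw [hσbar, Matrix.mul_smul, Matrix.smul_mul, Matrix.mul_sum, Matrix.sum_mul]
    have e3 : ((q j : ℝ) : ℂ) = cC • ∑ x : Fin m → Bool, (Vᴴ * σ x * V) j j := by
      have := (e1.symm.trans e2)
      have e4 := congrArg (fun M : Matrix (Fin d) (Fin d) ℂ => M j j) this
      simpa [Matrix.sum_apply, diagonal_apply_eq] using e4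
    have e5 : q j = (((2 : ℝ) ^ m)⁻¹ : ℝ) * ∑ x : Fin m → Bool, r x j := by
      have := congrArg Complex.re e3
      rw [Complex.ofReal_re] at this
      rw [this, hcR, smul_eq_mul, Complex.re_ofReal_mul, Complex.re_sum]
    rw [e5]
    have hpm : (0:ℝ) < (2 : ℝ) ^ m := by positivity
    field_simp
  have hrnn : ∀ x j, 0 ≤ r x j := by
    intro x j
    have hρ := (hσ x).1
    have hspecU := spec_eq hρ.1
    show 0 ≤ ((Vᴴ * σ x * V) j j).re
    conv_rhs => rw [hspecU]
    rw [entry_re]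
    exact Finset.sum_nonneg fun i _ => mul_nonneg (hρ.eigenvalues_nonneg i) (by positivity)
  have hsupp0 : ∀ x j, q j = 0 → r x j = 0 := by
    intro x j hqj
    have h0 : ∑ y : Fin m → Bool, r y j = 0 := by rw [havg j, hqj]; ring
    exact (Finset.sum_eq_zero_iff_of_nonneg (fun y _ => hrnn y j)).mp h0 x (Finset.mem_univ x)
  have hlog2pos : (0:ℝ) < Real.log 2 := Real.log_pos (by norm_num)
  -- the per-state key inequality
  have key : ∀ x : Fin m → Bool, traceNorm (σbar - σ x) ^ 2
      ≤ 4 * Real.log 2 * (-vnEntropy (σ x) - ∑ j, r x j * Real.logb 2 (q j)) := by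
    intro x
    obtain ⟨hρp, hρtr⟩ := hσ x
    have hρH := hρp.1
    set U : Matrix (Fin d) (Fin d) ℂ := (hρH.eigenvectorUnitary : Matrix (Fin d) (Fin d) ℂ)
      with hUdef
    set p : Fin d → ℝ := hρH.eigenvalues with hpdef
    have hU1 : Uᴴ * U = 1 := spec_hU1 hρH
    have hU2 : U * Uᴴ = 1 := spec_hU2 hρH
    have hspecU : σ x = U * diagonal (fun i => ((p i : ℝ) : ℂ)) * Uᴴ := spec_eq hρH
    have hpnn : ∀ i, 0 ≤ p i := hρp.eigenvalues_nonneg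
    have hpsum : ∑ i, p i = 1 := by
      have h := congrArg Matrix.trace hspecU
      rw [hρtr, trace_conj hU1] at h
      have h2 : ((∑ i, p i : ℝ) : ℂ) = 1 := by rw [Complex.ofReal_sum, ← h]
      exact_mod_cast h2
    set c : Fin d → Fin d → ℝ := fun j i => ‖(Vᴴ * U) j i‖ ^ 2 with hcdef
    have hcnn : ∀ j i, 0 ≤ c j i := fun j i => by positivity
    have hcol : ∀ i, ∑ j, c j i = 1 := by
      have hWW : (Vᴴ * U)ᴴ * (Vᴴ * U) = 1 := by
        rw [conjTranspose_mul, conjTranspose_conjTranspose]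
        calc Uᴴ * V * (Vᴴ * U) = Uᴴ * (V * Vᴴ) * U := by noncomm_ring
          _ = 1 := by rw [hV2, mul_one, hU1]
      intro i
      have e2 : ((Vᴴ * U)ᴴ * (Vᴴ * U)) i i = ∑ j, ((c j i : ℝ) : ℂ) := by
        rw [mul_apply]
        refine Finset.sum_congr rfl fun j _ => ?_
        rw [conjTranspose_apply, star_mul_self_eq']
      have e3 : (∑ j, ((c j i : ℝ) : ℂ)) = 1 := by rw [← e2, hWW, one_apply_eq]
      have e4 : ((∑ j, c j i : ℝ) : ℂ) = 1 := by rw [Complex.ofReal_sum]; exact e3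
      exact_mod_cast e4
    have hrx : ∀ j, r x j = ∑ i, p i * c j i := by
      intro j
      show ((Vᴴ * σ x * V) j j).re = _
      conv_lhs => rw [hspecU]
      rw [entry_re]
    have hsuppx : ∀ j, q j = 0 → ∀ i, p i * c j i = 0 := by
      intro j hqj i
      have h0 : ∑ i, p i * c j i = 0 := by rw [← hrx j]; exact hsupp0 x j hqj
      exact (Finset.sum_eq_zero_iff_of_nonneg
        (fun i _ => mul_nonneg (hpnn i) (hcnn j i))).mp h0 i (Finset.mem_univ i)
    -- the overlap quantity
    set G : ℝ := ((msqrt σbar * msqrt (σ x)).trace).re with hGdef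
    have hmsx : msqrt (σ x) = U * diagonal (fun i => ((Real.sqrt (p i) : ℝ) : ℂ)) * Uᴴ := by
      conv_lhs => rw [hspecU]
      exact msqrt_conj hU1 p hpnn
    have hG : G = ∑ j, ∑ i, Real.sqrt (q j) * Real.sqrt (p i) * c j i := by
      rw [hGdef, hmsbar, hmsx, trace_conj_pair]
    have hcore := core_jensen p q c hpnn hqnn hcnn hpsum hcol hsuppx
    have hpent : vnEntropy (σ x) = -∑ i, p i * Real.logb 2 (p i) := vnEntropy_eq hρH
    set Dx : ℝ := -vnEntropy (σ x) - ∑ j, r x j * Real.logb 2 (q j) with hDdef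
    have hexp_eq : (1/2) * ((∑ j, (∑ i, p i * c j i) * Real.log (q j))
        - ∑ i, p i * Real.log (p i)) = -(Real.log 2 / 2) * Dx := by
      rw [hDdef, hpent]
      have hb : ∀ (u v : ℝ), u * Real.logb 2 v = (u * Real.log v) / Real.log 2 := by
        intro u v; rw [Real.logb]; ring
      simp only [hb, hrx]
      rw [← Finset.sum_div, ← Finset.sum_div]
      field_simp
      ring
    have hEG : Real.exp (-(Real.log 2 / 2) * Dx) ≤ G := by
      rw [← hexp_eq, hG]; exact hcore
    -- trace identities
    set A : Matrix (Fin d) (Fin d) ℂ := msqrt σbar with hAdef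
    set B : Matrix (Fin d) (Fin d) ℂ := msqrt (σ x) with hBdef
    have hA2 : A * A = σbar := by rw [hAdef]; exact msqrt_mul_self' hbar
    have hB2 : B * B = σ x := by rw [hBdef]; exact msqrt_mul_self' hρp
    have hAH : A.IsHermitian := by rw [hAdef]; exact (msqrt_posSemidef hbar).1
    have hBH : B.IsHermitian := by rw [hBdef]; exact (msqrt_posSemidef hρp).1
    have hXH : (A - B).IsHermitian := hAH.sub hBH
    have hYH : (A + B).IsHermitian := hAH.add hBH
    have hΔH : (σbar - σ x).IsHermitian := hbar.1.sub hρH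
    have hXY : (A - B) * (A + B) + (A + B) * (A - B) = (σbar - σ x) + (σbar - σ x) := by
      have e : (A - B) * (A + B) + (A + B) * (A - B) = (A*A - B*B) + (A*A - B*B) := by
        noncomm_ring
      rw [e, hA2, hB2]
    have hbound := traceNorm_herm_le hΔH hXH hYH hXY
    have htX : (((A - B) * (A - B)).trace).re = 2 - 2*G := by
      have e : (A - B) * (A - B) = (A*A + B*B) - (A*B + B*A) := by noncomm_ring
      have e2 : (B*A).trace = (A*B).trace := trace_mul_comm _ _
      rw [e, trace_sub, trace_add, trace_add, e2, hA2, hB2, htrbar, hρtr,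
        Complex.sub_re, Complex.add_re, Complex.add_re]
      have : ((A*B).trace).re = G := rfl
      rw [this]
      norm_num
      ring
    have htY : (((A + B) * (A + B)).trace).re = 2 + 2*G := by
      have e : (A + B) * (A + B) = (A*A + B*B) + (A*B + B*A) := by noncomm_ring
      have e2 : (B*A).trace = (A*B).trace := trace_mul_comm _ _
      rw [e, trace_add, trace_add, trace_add, e2, hA2, hB2, htrbar, hρtr,
        Complex.add_re, Complex.add_re, Complex.add_re]
      have : ((A*B).trace).re = G := rfl
      rw [this]
      norm_num
      ring
    have hXnn : (0:ℝ) ≤ 2 - 2*G := by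
      rw [← htX]
      have e : (((A - B)ᴴ * (A - B)).trace).re = (((A - B) * (A - B)).trace).re := by
        rw [hXH.eq]
      rw [← e, hsq_eq]
      positivity
    have hYnn : (0:ℝ) ≤ 2 + 2*G := by
      rw [← htY]
      have e : (((A + B)ᴴ * (A + B)).trace).re = (((A + B) * (A + B)).trace).re := by
        rw [hYH.eq]
      rw [← e, hsq_eq]
      positivity
    rw [htX, htY] at hbound
    have htn : 0 ≤ traceNorm (σbar - σ x) := traceNorm_herm_nonneg hΔH
    have hsquare : traceNorm (σbar - σ x) ^ 2 ≤ (2 - 2*G) * (2 + 2*G) := by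
      have h := pow_le_pow_left₀ htn hbound 2
      rwa [mul_pow, Real.sq_sqrt hXnn, Real.sq_sqrt hYnn] at h
    have hEpos : 0 < Real.exp (-(Real.log 2 / 2) * Dx) := Real.exp_pos _
    have hG2 : Real.exp (-(Real.log 2) * Dx) ≤ G ^ 2 := by
      have e : Real.exp (-(Real.log 2 / 2) * Dx) ^ 2 = Real.exp (-(Real.log 2) * Dx) := by
        rw [sq, ← Real.exp_add]
        congr 1
        ring
      rw [← e]
      exact pow_le_pow_left₀ (le_of_lt hEpos) hEG 2
    have hlin : 1 - Real.exp (-(Real.log 2) * Dx) ≤ Real.log 2 * Dx := by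
      have h := Real.add_one_le_exp (-(Real.log 2 * Dx))
      have e : -(Real.log 2) * Dx = -(Real.log 2 * Dx) := by ring
      rw [e]
      linarith
    nlinarith [hsquare, hG2, hlin]
  -- final assembly
  set L : ℝ := ∑ x : Fin m → Bool, traceNorm (σbar - σ x) with hLdef
  set I : ℝ := vnEntropy σbar - ((2 : ℝ) ^ m)⁻¹ * ∑ x : Fin m → Bool, vnEntropy (σ x) with hIdef
  have hsumD : ∑ x : Fin m → Bool, (-vnEntropy (σ x) - ∑ j, r x j * Real.logb 2 (q j))
      = (2 : ℝ) ^ m * I := by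
    rw [Finset.sum_sub_distrib]
    have e1 : ∑ x : Fin m → Bool, ∑ j, r x j * Real.logb 2 (q j)
        = (2 : ℝ) ^ m * ∑ j, q j * Real.logb 2 (q j) := by
      rw [Finset.sum_comm, Finset.mul_sum]
      refine Finset.sum_congr rfl fun j _ => ?_
      rw [← Finset.sum_mul, havg j]
      ring
    have e2 : ∑ x : Fin m → Bool, -vnEntropy (σ x)
        = -∑ x : Fin m → Bool, vnEntropy (σ x) := by
      rw [Finset.sum_neg_distrib]
    rw [e1, e2, hIdef, hqent]
    have hpm : ((2:ℝ) ^ m) ≠ 0 := by positivity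
    field_simp
    ring
  have hLnn : 0 ≤ L := Finset.sum_nonneg fun x _ =>
    traceNorm_herm_nonneg (hbar.1.sub (hσ x).1.1)
  have hpm : (0:ℝ) < (2 : ℝ) ^ m := by positivity
  have hCS : L ^ 2 ≤ (2:ℝ) ^ m * ∑ x : Fin m → Bool, traceNorm (σbar - σ x) ^ 2 := by
    have h := sq_sum_le_card_mul_sum_sq (s := (Finset.univ : Finset (Fin m → Bool)))
      (f := fun x => traceNorm (σbar - σ x))
    rw [hcard] at h
    rw [hLdef]
    push_cast at h
    exact h
  have hsum2 : ∑ x : Fin m → Bool, traceNorm (σbar - σ x) ^ 2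
      ≤ 4 * Real.log 2 * ((2:ℝ) ^ m * I) := by
    calc ∑ x : Fin m → Bool, traceNorm (σbar - σ x) ^ 2
        ≤ ∑ x : Fin m → Bool,
            4 * Real.log 2 * (-vnEntropy (σ x) - ∑ j, r x j * Real.logb 2 (q j)) :=
          Finset.sum_le_sum fun x _ => key x
      _ = 4 * Real.log 2 * ((2:ℝ) ^ m * I) := by rw [← Finset.mul_sum, hsumD]
  have hL2 : (((2:ℝ) ^ m)⁻¹ * L) ^ 2 ≤ 4 * Real.log 2 * I := by
    have h1 : L ^ 2 ≤ ((2:ℝ) ^ m) ^ 2 * (4 * Real.log 2 * I) := by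
      calc L ^ 2 ≤ (2:ℝ) ^ m * ∑ x : Fin m → Bool, traceNorm (σbar - σ x) ^ 2 := hCS
        _ ≤ (2:ℝ) ^ m * (4 * Real.log 2 * ((2:ℝ) ^ m * I)) := by
            exact mul_le_mul_of_nonneg_left hsum2 (le_of_lt hpm)
        _ = ((2:ℝ) ^ m) ^ 2 * (4 * Real.log 2 * I) := by ring
    rw [mul_pow]
    calc (((2:ℝ) ^ m)⁻¹) ^ 2 * L ^ 2
        ≤ (((2:ℝ) ^ m)⁻¹) ^ 2 * (((2:ℝ) ^ m) ^ 2 * (4 * Real.log 2 * I)) := by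
          exact mul_le_mul_of_nonneg_left h1 (by positivity)
      _ = 4 * Real.log 2 * I := by field_simp
  have hlogI : 0 ≤ 4 * Real.log 2 * I := le_trans (sq_nonneg _) hL2
  have hInn : 0 ≤ I := by
    by_contra hneg
    push_neg at hneg
    have : 4 * Real.log 2 * I < 0 := mul_neg_of_pos_of_neg (by positivity) hneg
    linarith
  have h1 : ((2:ℝ) ^ m)⁻¹ * L ≤ Real.sqrt (4 * Real.log 2 * I) := by
    refine (Real.le_sqrt (by positivity) (by linarith)).mpr hL2
  refine h1.trans ?_
  have e : (2:ℝ) * Real.sqrt I = Real.sqrt (4 * I) := by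
    rw [show (4:ℝ) * I = 2^2 * I by ring, Real.sqrt_mul (by positivity : (0:ℝ) ≤ (2:ℝ)^2),
      Real.sqrt_sq (by norm_num : (0:ℝ) ≤ 2)]
  rw [e]
  apply Real.sqrt_le_sqrt
  have hl1 : Real.log 2 ≤ 1 := by
    have := Real.log_two_lt_d9
    linarith
  have h4 : 4 * Real.log 2 * I ≤ 4 * 1 * I :=
    mul_le_mul_of_nonneg_right (by linarith) hInn
  linarith
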